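/- Assume q = 2m. The subspace W of Λ²V spanned by {e_{2k−1} ∧ e_{2k} : 1 ≤ k ≤ m} is invariant under R_ext; the matrix of the restriction R_ext|_W in this basis has entries ⟨R_ext(e_{2i−1}∧e_{2i}), e_{2j−1}∧e_{2j}⟩ = 3b_i² if i = j and 2b_i b_j if i ≠ j; and R_ext|_W is positive semidefinite. -/

import Mathlib

open scoped BigOperators

namespace Paper

noncomputable section

/-- Coefficients of exterior forms w.r.t. the fixed orthonormal basis `e₁,…,e_q` of `V = ℝ^q`:
a form is identified with its family of coefficients indexed by subsets of `Fin q`. -/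
abbrev Ext (q : ℕ) := Finset (Fin q) → ℝ

variable {q : ℕ}

/-- `(-1)^{#{j ∈ s | j < i}}` -/
def sgn (i : Fin q) (s : Finset (Fin q)) : ℝ := (-1 : ℝ) ^ (s.filter fun j => j < i).card

/-- Exterior multiplication by the basis vector `e_i`. -/
def wB (i : Fin q) (ω : Ext q) : Ext q := fun s =>
  if i ∈ s then sgn i (s.erase i) * ω (s.erase i) else 0

/-- Interior product (contraction) with the basis vector `e_i`. -/
def iB (i : Fin q) (ω : Ext q) : Ext q := fun s =>
  if i ∈ s then 0 else sgn i s * ω (insert i s)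

/-- The basis monomial `e_{i₁} ∧ ⋯ ∧ e_{i_p}`, for `s = {i₁ < ⋯ < i_p}`. -/
def bF (s : Finset (Fin q)) : Ext q := fun t => if t = s then 1 else 0

/-- The basis vector `e_i` of `V = ℝ^q`. -/
def eB (i : Fin q) : Fin q → ℝ := Pi.single i 1

/-- Exterior multiplication by the vector `X ∈ V`. -/
def wV (X : Fin q → ℝ) (ω : Ext q) : Ext q := ∑ i, X i • wB i ω

/-- Interior product with the vector `X ∈ V`. -/
def iV (X : Fin q → ℝ) (ω : Ext q) : Ext q := ∑ i, X i • iB i ω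

/-- Clifford multiplication `X · ω = X ∧ ω − X ⌟ ω` of a vector with a form. -/
def clV (X : Fin q → ℝ) (ω : Ext q) : Ext q := wV X ω - iV X ω

/-- Clifford multiplication `e_{i₁} · e_{i₂} ⋯ e_{i_p} · ω` for `s = {i₁ < ⋯ < i_p}`. -/
def clB (s : Finset (Fin q)) (ω : Ext q) : Ext q :=
  (Finset.sort s (· ≤ ·)).foldr (fun i τ => clV (eB i) τ) ω

/-- Clifford multiplication of two forms. -/
def clM (ω₁ ω₂ : Ext q) : Ext q := ∑ s : Finset (Fin q), ω₁ s • clB s ω₂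

/-- The bracket `[ω₁, ω₂] = ω₁ · ω₂ − ω₂ · ω₁`. -/
def brkt (ω₁ ω₂ : Ext q) : Ext q := clM ω₁ ω₂ - clM ω₂ ω₁

/-- Exterior multiplication by the monomial `e_{i₁} ∧ ⋯ ∧ e_{i_p}`. -/
def wBs (s : Finset (Fin q)) (ω : Ext q) : Ext q :=
  (Finset.sort s (· ≤ ·)).foldr (fun i τ => wB i τ) ω

/-- The wedge product of two forms. -/
def wM (ω₁ ω₂ : Ext q) : Ext q := ∑ s : Finset (Fin q), ω₁ s • wBs s ω₂

/-- The inner product on forms, for which the basis monomials are orthonormal. -/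
def ip (ω φ : Ext q) : ℝ := ∑ s : Finset (Fin q), ω s * φ s

/-- `ω` is a form of (pure) degree `p`. -/
def homog (p : ℕ) (ω : Ext q) : Prop := ∀ s : Finset (Fin q), s.card ≠ p → ω s = 0

/-- The inner product of two vectors of `V = ℝ^q`. -/
def dotP (X Y : Fin q → ℝ) : ℝ := ∑ i, X i * Y i

/-- A vector of `V` regarded as a 1-form. -/
def oneF (X : Fin q → ℝ) : Ext q := ∑ i, X i • bF {i}

/-- The wedge `X ∧ Y` of two vectors. -/
def w2 (X Y : Fin q → ℝ) : Ext q := wV X (oneF Y)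

/-- Two-element subsets, indexing the canonical orthonormal basis of `Λ²V`. -/
def twoSets (q : ℕ) : Finset (Finset (Fin q)) := Finset.univ.filter fun s => s.card = 2

/-- The Bochner operator quadratic form `⟨B_R^{[p]} ω, φ⟩ =
(1/4) Σ_{r,s} ⟨R ψ_r, ψ_s⟩ ⟨[ψ_r,ω],[ψ_s,φ]⟩`, computed in the canonical
orthonormal basis `{e_i ∧ e_j}_{i<j}` of `Λ²V`. -/
def Bform (R : Ext q →ₗ[ℝ] Ext q) (ω φ : Ext q) : ℝ :=
  (1 / 4 : ℝ) * ∑ s ∈ twoSets q, ∑ t ∈ twoSets q,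
    ip (R (bF s)) (bF t) * ip (brkt (bF s) ω) (brkt (bF t) φ)

lemma dotP_smul_eB (c : ℝ) (x y : Fin q) : dotP (c • eB x) (eB y) = if x = y then c else 0 := by
  unfold dotP eB
  rw [Finset.sum_eq_single x]
  · simp [Pi.single_apply, eq_comm]
  · intro i _ hix
    simp [Pi.single_apply, hix]
  · simp

lemma wV_eB (a : Fin q) (ω : Ext q) : wV (eB a) ω = wB a ω := by
  unfold wV eB
  rw [Finset.sum_eq_single a]
  · simp
  · intro i _ hia
    simp [Pi.single_apply, hia]
  · simp

lemma oneF_eB (a : Fin q) : oneF (eB a) = bF {a} := by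
  unfold oneF eB
  rw [Finset.sum_eq_single a]
  · simp
  · intro i _ hia
    simp [Pi.single_apply, hia]
  · simp

lemma w2_eB {a c : Fin q} (hac : a < c) : w2 (eB a) (eB c) = bF {a, c} := by
  unfold w2
  rw [wV_eB, oneF_eB]
  funext s
  unfold wB bF
  by_cases hs : s = {a, c}
  · subst hs
    have hmem : a ∈ ({a, c} : Finset (Fin q)) := by simp
    rw [if_pos hmem]
    have hne : a ∉ ({c} : Finset (Fin q)) := by simp [(Fin.ne_of_lt hac)]
    have her : ({a, c} : Finset (Fin q)).erase a = {c} := by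
      rw [show ({a,c} : Finset (Fin q)) = insert a {c} from rfl, Finset.erase_insert hne]
    rw [her]
    have : sgn a ({c} : Finset (Fin q)) = 1 := by
      unfold sgn
      rw [Finset.filter_singleton, if_neg (by exact fun hlt => absurd hlt (not_lt_of_gt hac))]
      simp
    simp [this]
  · rw [if_neg hs]
    by_cases ha : a ∈ s
    · rw [if_pos ha, if_neg, mul_zero]
      intro he
      exact hs (by rw [← Finset.insert_erase ha, he])
    · rw [if_neg ha]

lemma ip_bF (ω : Ext q) (s : Finset (Fin q)) : ip ω (bF s) = ω s := by
  unfold ip bF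
  rw [Finset.sum_eq_single s]
  · simp
  · intro t _ hts; simp [hts]
  · simp

lemma bF_homog {s : Finset (Fin q)} {p : ℕ} (hs : s.card = p) : homog p (bF s) := by
  intro t ht
  unfold bF
  rw [if_neg]
  rintro rfl
  exact ht hs

lemma ip_sum_smul_left {n : ℕ} (c : Fin n → ℝ) (f : Fin n → Ext q) (φ : Ext q) :
    ip (∑ j, c j • f j) φ = ∑ j, c j * ip (f j) φ := by
  unfold ip
  simp only [Finset.sum_apply, Pi.smul_apply, smul_eq_mul, Finset.sum_mul]
  rw [Finset.sum_comm]
  refine Finset.sum_congr rfl fun j _ => ?_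
  rw [Finset.mul_sum]
  refine Finset.sum_congr rfl fun s _ => ?_
  ring

lemma ip_sum_smul_right {n : ℕ} (c : Fin n → ℝ) (f : Fin n → Ext q) (φ : Ext q) :
    ip φ (∑ j, c j • f j) = ∑ j, c j * ip φ (f j) := by
  unfold ip
  simp only [Finset.sum_apply, Pi.smul_apply, smul_eq_mul, Finset.mul_sum]
  rw [Finset.sum_comm]
  refine Finset.sum_congr rfl fun j _ => ?_
  refine Finset.sum_congr rfl fun s _ => ?_
  ring

lemma pair_inj {a c x y : Fin q} (h1 : a < c) (h2 : x < y)
    (h : ({a, c} : Finset (Fin q)) = {x, y}) : a = x ∧ c = y := by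
  have ha : a = x ∨ a = y := by
    have : a ∈ ({x, y} : Finset (Fin q)) := h ▸ by simp
    simpa using this
  have hc : c = x ∨ c = y := by
    have : c ∈ ({x, y} : Finset (Fin q)) := h ▸ by simp
    simpa using this
  have hx : x = a ∨ x = c := by
    have : x ∈ ({a, c} : Finset (Fin q)) := h ▸ by simp
    simpa using this
  have h1' : a.val < c.val := h1
  have h2' : x.val < y.val := h2
  have ha' : a.val = x.val ∨ a.val = y.val := by
    rcases ha with rfl | rfl
    · exact Or.inl rfl
    · exact Or.inr rfl
  have hc' : c.val = x.val ∨ c.val = y.val := by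
    rcases hc with rfl | rfl
    · exact Or.inl rfl
    · exact Or.inr rfl
  have hx' : x.val = a.val ∨ x.val = c.val := by
    rcases hx with rfl | rfl
    · exact Or.inl rfl
    · exact Or.inr rfl
  refine ⟨Fin.ext ?_, Fin.ext ?_⟩ <;>
    (rcases ha' with h|h <;> rcases hc' with h'|h' <;> rcases hx' with h''|h'' <;> omega)

lemma Ak_lt (m : ℕ) (k : Fin m) : 2 * k.val < 2 * m := by have := k.isLt; omega

/-- `e_{2k+1}`'s index (0-based `2k`). -/
def Ak (m : ℕ) (k : Fin m) : Fin (2 * m) := ⟨2 * k.val, Ak_lt m k⟩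

lemma Bk_lt (m : ℕ) (k : Fin m) : 2 * k.val + 1 < 2 * m := by have := k.isLt; omega

/-- index `2k+1`. -/
def Bk (m : ℕ) (k : Fin m) : Fin (2 * m) := ⟨2 * k.val + 1, Bk_lt m k⟩

/-- The basis 2-form `ω_k = e_{2k} ∧ e_{2k+1}`. -/
def om (m : ℕ) (k : Fin m) : Ext (2 * m) := w2 (eB (Ak m k)) (eB (Bk m k))

lemma Ak_lt_Bk (m : ℕ) (k : Fin m) : Ak m k < Bk m k := by
  simp [Ak, Bk, Fin.lt_def]

lemma om_eq (m : ℕ) (k : Fin m) : om m k = bF {Ak m k, Bk m k} := w2_eB (Ak_lt_Bk m k)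

lemma card_pair_AB (m : ℕ) (k : Fin m) : ({Ak m k, Bk m k} : Finset (Fin (2*m))).card = 2 := by
  rw [Finset.card_insert_of_notMem (by simp [Ak, Bk, Fin.ext_iff]), Finset.card_singleton]

section Main

variable {m : ℕ} (h : (Fin (2 * m) → ℝ) →ₗ[ℝ] (Fin (2 * m) → ℝ)) (b : Fin m → ℝ)

variable (hcan : ∀ k : Fin m,
      h (eB (Ak m k)) = b k • eB (Bk m k) ∧ h (eB (Bk m k)) = (-(b k)) • eB (Ak m k))

include hcan

lemma hH (a c : Fin (2 * m)) :
    dotP (h (eB a)) (eB c) =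
      if a.val % 2 = 0 then
        (if c.val = a.val + 1 then b ⟨a.val / 2, by have := a.isLt; omega⟩ else 0)
      else
        (if c.val + 1 = a.val then -(b ⟨a.val / 2, by have := a.isLt; omega⟩) else 0) := by
  have ham : a.val / 2 < m := by have := a.isLt; omega
  by_cases hp : a.val % 2 = 0
  · have hak : a = Ak m ⟨a.val / 2, ham⟩ := Fin.ext (by simp [Ak]; omega)
    rw [show h (eB a) = b ⟨a.val / 2, ham⟩ • eB (Bk m ⟨a.val / 2, ham⟩) from by
      conv_lhs => rw [hak]
      exact (hcan _).1, dotP_smul_eB, if_pos hp]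
    split_ifs with h1 h2
    · rfl
    · exfalso
      have := congrArg Fin.val h1
      simp [Bk] at this
      omega
    · exact absurd (Fin.ext (by simp [Bk]; omega) : Bk m ⟨a.val / 2, ham⟩ = c) h1
    · rfl
  · have hak : a = Bk m ⟨a.val / 2, ham⟩ := Fin.ext (by simp [Bk]; omega)
    rw [show h (eB a) = (-(b ⟨a.val / 2, ham⟩)) • eB (Ak m ⟨a.val / 2, ham⟩) from by
      conv_lhs => rw [hak]
      exact (hcan _).2, dotP_smul_eB, if_neg hp]
    split_ifs with h1 h2
    · rfl
    · exfalso
      have := congrArg Fin.val h1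
      simp [Ak] at this
      omega
    · exact absurd (Fin.ext (by simp [Ak]; omega) : Ak m ⟨a.val / 2, ham⟩ = c) h1
    · rfl


lemma H1 (i : Fin m) : dotP (h (eB (Ak m i))) (eB (Bk m i)) = b i := by
  rw [hH h b hcan]
  simp only [Ak, Bk]
  rw [if_pos (show 2 * i.val % 2 = 0 by omega), if_pos trivial]
  congr 1
  exact Fin.ext (show 2 * i.val / 2 = i.val by omega)

lemma H2 (i : Fin m) (c : Fin (2 * m)) :
    dotP (h (eB (Bk m i))) (eB c) = if c.val = 2 * i.val then -(b i) else 0 := by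
  rw [hH h b hcan]
  delta Ak Bk
  dsimp only
  rw [if_neg (show ¬ (2 * i.val + 1) % 2 = 0 by omega)]
  split_ifs with h1 h2 h2
  · rw [neg_inj]; congr 1
    exact Fin.ext (show (2 * i.val + 1) / 2 = i.val by omega)
  · exact absurd (show c.val = 2 * i.val by omega) h2
  · exact absurd (show c.val + 1 = 2 * i.val + 1 by omega) h1
  · rfl

lemma H3 (i : Fin m) (c : Fin (2 * m)) :
    dotP (h (eB (Ak m i))) (eB c) = if c.val = 2 * i.val + 1 then b i else 0 := by
  rw [hH h b hcan]
  delta Ak Bk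
  dsimp only
  rw [if_pos (show 2 * i.val % 2 = 0 by omega)]
  split_ifs with h1
  · congr 1
    exact Fin.ext (show 2 * i.val / 2 = i.val by omega)
  · rfl

lemma H4 (i : Fin m) (a : Fin (2 * m)) :
    dotP (h (eB a)) (eB (Ak m i)) = if a.val = 2 * i.val + 1 then -(b i) else 0 := by
  rw [hH h b hcan]
  delta Ak Bk
  dsimp only
  by_cases hp : a.val % 2 = 0
  · rw [if_pos hp, if_neg (show ¬ 2 * i.val = a.val + 1 by omega), if_neg (by omega)]
  · rw [if_neg hp]
    split_ifs with h1 h2 h2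
    · rw [neg_inj]; congr 1
      have h1' : 2 * i.val + 1 = a.val := h1
      exact Fin.ext (show a.val / 2 = i.val by omega)
    · exfalso
      have h1' : 2 * i.val + 1 = a.val := h1
      omega
    · exact absurd (show 2 * i.val + 1 = a.val by omega) h1
    · rfl

lemma entry (Rext : Ext (2 * m) →ₗ[ℝ] Ext (2 * m))
    (hRf : ∀ X Y Z W : Fin (2 * m) → ℝ,
      ip (Rext (w2 X Y)) (w2 Z W)
        = 2 * dotP (h X) Y * dotP (h Z) W - dotP (h Y) Z * dotP (h X) W
            - dotP (h Z) X * dotP (h Y) W) (i j : Fin m) :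
    ip (Rext (om m i)) (om m j) = if i = j then 3 * b i ^ 2 else 2 * b i * b j := by
  unfold om
  rw [hRf, H1 h b hcan i, H1 h b hcan j, H2 h b hcan i (Ak m j), H3 h b hcan i (Bk m j),
    H3 h b hcan j (Ak m i), H2 h b hcan i (Bk m j)]
  by_cases hij : i = j
  · subst hij
    rw [if_pos rfl, if_pos (show (Ak m i).val = 2 * i.val from rfl),
      if_pos (show (Bk m i).val = 2 * i.val + 1 from rfl),
      if_neg (show ¬ (Ak m i).val = 2 * i.val + 1 from by show ¬ 2*i.val = 2*i.val+1; omega)]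
    ring
  · have hij' : i.val ≠ j.val := fun hv => hij (Fin.ext hv)
    rw [if_neg hij,
      if_neg (show ¬ (Ak m j).val = 2 * i.val from by show ¬ 2*j.val = 2*i.val; omega),
      if_neg (show ¬ (Bk m j).val = 2 * i.val + 1 from by show ¬ 2*j.val+1 = 2*i.val+1; omega),
      if_neg (show ¬ (Ak m i).val = 2 * j.val + 1 from by show ¬ 2*i.val = 2*j.val+1; omega)]
    ring

lemma hRom (Rext : Ext (2 * m) →ₗ[ℝ] Ext (2 * m))
    (hR2 : ∀ η : Ext (2 * m), homog 2 η → homog 2 (Rext η))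
    (hRf : ∀ X Y Z W : Fin (2 * m) → ℝ,
      ip (Rext (w2 X Y)) (w2 Z W)
        = 2 * dotP (h X) Y * dotP (h Z) W - dotP (h Y) Z * dotP (h X) W
            - dotP (h Z) X * dotP (h Y) W) (i : Fin m) :
    Rext (om m i) = ∑ j, (if i = j then 3 * b i ^ 2 else 2 * b i * b j) • om m j := by
  funext s
  rw [Finset.sum_apply]
  by_cases hs : s.card = 2
  · obtain ⟨a, c, hac, rfl⟩ := Finset.card_eq_two.mp hs
    suffices claim : ∀ a c : Fin (2 * m), a < c →
        Rext (om m i) {a, c}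
          = ∑ j, ((if i = j then 3 * b i ^ 2 else 2 * b i * b j) • om m j) {a, c} by
      rcases lt_or_gt_of_ne hac with hlt | hlt
      · exact claim a c hlt
      · rw [Finset.pair_comm]; exact claim c a hlt
    intro a c hlt
    have hlt' : a.val < c.val := hlt
    have hterm : ∀ j : Fin m,
        ((if i = j then 3 * b i ^ 2 else 2 * b i * b j) • om m j) {a, c}
          = (if i = j then 3 * b i ^ 2 else 2 * b i * b j)
              * (if a.val = 2 * j.val ∧ c.val = 2 * j.val + 1 then 1 else 0) := by
      intro j
      rw [om_eq, Pi.smul_apply, smul_eq_mul]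
      congr 1
      show bF _ _ = _
      unfold bF
      refine if_congr ?_ rfl rfl
      constructor
      · intro he
        obtain ⟨h1, h2⟩ := pair_inj hlt (Ak_lt_Bk m j) he
        exact ⟨congrArg Fin.val h1, congrArg Fin.val h2⟩
      · rintro ⟨h1, h2⟩
        rw [show a = Ak m j from Fin.ext h1, show c = Bk m j from Fin.ext h2]
    simp only [hterm]
    have L : Rext (om m i) {a, c} = ip (Rext (om m i)) (bF {a, c}) := (ip_bF _ _).symm
    rw [L, ← w2_eB hlt, show om m i = w2 (eB (Ak m i)) (eB (Bk m i)) from rfl, hRf,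
      H1 h b hcan i, hH h b hcan a c, H2 h b hcan i a, H3 h b hcan i c,
      H4 h b hcan i a, H2 h b hcan i c]
    by_cases hcase : a.val % 2 = 0 ∧ c.val = a.val + 1
    · have hkm : a.val / 2 < m := by have := a.isLt; omega
      rw [Finset.sum_eq_single (⟨a.val / 2, hkm⟩ : Fin m)]
      · rw [if_pos (show a.val = 2 * ((⟨a.val / 2, hkm⟩ : Fin m)).val
              ∧ c.val = 2 * ((⟨a.val / 2, hkm⟩ : Fin m)).val + 1 from
            ⟨by show a.val = 2 * (a.val / 2); omega,
             by show c.val = 2 * (a.val / 2) + 1; omega⟩), mul_one]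
        by_cases hik : i = (⟨a.val / 2, hkm⟩ : Fin m)
        · have hiv : i.val = a.val / 2 := congrArg Fin.val hik
          have hbb : ∀ p : a.val / 2 < m, b ⟨a.val / 2, p⟩ = b i := fun p => by rw [hik]
          rw [if_pos hik, if_pos hcase.1, if_pos hcase.2,
            if_pos (show a.val = 2 * i.val by omega),
            if_pos (show c.val = 2 * i.val + 1 by omega),
            if_neg (show ¬ a.val = 2 * i.val + 1 by omega), hbb]
          ring
        · have hiv : i.val ≠ a.val / 2 := fun hv => hik (Fin.ext hv)
          have hbb : ∀ p : a.val / 2 < m,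
              b ⟨a.val / 2, p⟩ = b (⟨a.val / 2, hkm⟩ : Fin m) := fun p => rfl
          rw [if_neg hik, if_pos hcase.1, if_pos hcase.2,
            if_neg (show ¬ a.val = 2 * i.val by omega),
            if_neg (show ¬ c.val = 2 * i.val + 1 by omega),
            if_neg (show ¬ a.val = 2 * i.val + 1 by omega), hbb]
          ring
      · intro j _ hjk
        rw [if_neg (show ¬ (a.val = 2 * j.val ∧ c.val = 2 * j.val + 1) from by
          rintro ⟨h1, h2⟩
          exact hjk (Fin.ext (show j.val = a.val / 2 by omega))), mul_zero]
      · intro hcon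
        exact absurd (Finset.mem_univ _) hcon
    · refine Eq.trans ?_ (Finset.sum_eq_zero fun j _ => ?_).symm
      · split_ifs <;> first | ring1 | (exfalso; omega)
      · rw [if_neg (show ¬ (a.val = 2 * j.val ∧ c.val = 2 * j.val + 1) from by
          rintro ⟨h1, h2⟩
          exact hcase ⟨by omega, by omega⟩), mul_zero]
  · have h2om : homog 2 (om m i) := by rw [om_eq]; exact bF_homog (card_pair_AB m i)
    rw [hR2 _ h2om s hs]
    symm
    apply Finset.sum_eq_zero
    intro j _
    rw [om_eq, Pi.smul_apply, smul_eq_mul, bF_homog (card_pair_AB m j) s hs, mul_zero]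

end Main

/-- The subspace `W ⊆ Λ²V` spanned by `{e_{2k−1} ∧ e_{2k}}_{1≤k≤m}` is
invariant under `R_ext`; the matrix of `R_ext|_W` in this basis has entries `3b_i²` on
the diagonal and `2b_i b_j` off the diagonal; and `R_ext|_W` is positive semidefinite.
(Indices are shifted: paper's `e_k` is `eB ⟨k-1, _⟩`.) -/
theorem statement_8 (m : ℕ) (hm : 1 ≤ m)
    (h : (Fin (2 * m) → ℝ) →ₗ[ℝ] (Fin (2 * m) → ℝ)) (b : Fin m → ℝ)
    (hcan : ∀ k : Fin m,
      h (eB ⟨2 * (k : ℕ), by have := k.isLt; omega⟩)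
          = b k • eB ⟨2 * (k : ℕ) + 1, by have := k.isLt; omega⟩ ∧
        h (eB ⟨2 * (k : ℕ) + 1, by have := k.isLt; omega⟩)
          = (-(b k)) • eB ⟨2 * (k : ℕ), by have := k.isLt; omega⟩)
    (hord : ∀ k l : Fin m, k ≤ l → |b k| ≤ |b l|)
    (Rext : Ext (2 * m) →ₗ[ℝ] Ext (2 * m))
    (hR2 : ∀ η : Ext (2 * m), homog 2 η → homog 2 (Rext η))
    (hRf : ∀ X Y Z W : Fin (2 * m) → ℝ,
      ip (Rext (w2 X Y)) (w2 Z W)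
        = 2 * dotP (h X) Y * dotP (h Z) W - dotP (h Y) Z * dotP (h X) W
            - dotP (h Z) X * dotP (h Y) W)
    (W : Submodule ℝ (Ext (2 * m)))
    (hW : W = Submodule.span ℝ (Set.range fun k : Fin m =>
      w2 (eB ⟨2 * (k : ℕ), by have := k.isLt; omega⟩)
        (eB ⟨2 * (k : ℕ) + 1, by have := k.isLt; omega⟩))) :
    (∀ x ∈ W, Rext x ∈ W) ∧
      (∀ i j : Fin m,
        ip (Rext (w2 (eB ⟨2 * (i : ℕ), by have := i.isLt; omega⟩)
              (eB ⟨2 * (i : ℕ) + 1, by have := i.isLt; omega⟩)))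
            (w2 (eB ⟨2 * (j : ℕ), by have := j.isLt; omega⟩)
              (eB ⟨2 * (j : ℕ) + 1, by have := j.isLt; omega⟩))
          = if i = j then 3 * b i ^ 2 else 2 * b i * b j) ∧
      (∀ x ∈ W, 0 ≤ ip (Rext x) x) := by
  have hRom' := hRom h b hcan Rext hR2 hRf
  have hentry := entry h b hcan Rext hRf
  refine ⟨?_, fun i j => hentry i j, ?_⟩
  · intro x hx
    rw [hW] at hx ⊢
    refine Submodule.span_induction ?_ ?_ ?_ ?_ hx
    · rintro y ⟨k, rfl⟩
      show Rext (om m k) ∈ _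
      rw [hRom' k]
      exact Submodule.sum_mem _ fun j _ =>
        Submodule.smul_mem _ _ (Submodule.subset_span ⟨j, rfl⟩)
    · rw [map_zero]; exact Submodule.zero_mem _
    · intro y z _ _ hy hz
      rw [map_add]; exact Submodule.add_mem _ hy hz
    · intro r y _ hy
      rw [map_smul]; exact Submodule.smul_mem _ _ hy
  · intro x hx
    rw [hW] at hx
    obtain ⟨cf, hcf⟩ := Submodule.mem_span_range_iff_exists_fun ℝ |>.mp hx
    rw [← hcf]
    show 0 ≤ ip (Rext (∑ k, cf k • om m k)) (∑ k, cf k • om m k)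
    rw [map_sum]
    simp only [map_smul]
    rw [ip_sum_smul_left]
    have hinner : ∀ j : Fin m, ip (Rext (om m j)) (∑ k, cf k • om m k)
        = ∑ k, cf k * (if j = k then 3 * b j ^ 2 else 2 * b j * b k) := by
      intro j
      rw [ip_sum_smul_right]
      refine Finset.sum_congr rfl fun k _ => ?_
      rw [hentry j k]
    simp only [hinner]
    have hexp : ∀ j k : Fin m,
        cf j * (cf k * (if j = k then 3 * b j ^ 2 else 2 * b j * b k))
          = 2 * ((cf j * b j) * (cf k * b k)) + (if j = k then (cf j * b j) ^ 2 else 0) := by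
      intro j k
      split_ifs with hjk
      · subst hjk; ring
      · ring
    calc (0:ℝ) ≤ 2 * (∑ j, cf j * b j) ^ 2 + ∑ j, (cf j * b j) ^ 2 := by
          have h1 : (0:ℝ) ≤ 2 * (∑ j, cf j * b j) ^ 2 := by positivity
          have h2 : (0:ℝ) ≤ ∑ j : Fin m, (cf j * b j) ^ 2 :=
            Finset.sum_nonneg fun j _ => sq_nonneg _
          linarith
      _ = ∑ j, cf j * ∑ k, cf k * (if j = k then 3 * b j ^ 2 else 2 * b j * b k) := by
          simp only [Finset.mul_sum, hexp, Finset.sum_add_distrib]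
          congr 1
          · rw [sq, Finset.sum_mul_sum, Finset.mul_sum]
            refine Finset.sum_congr rfl fun j _ => ?_
            rw [Finset.mul_sum]
          · refine (Finset.sum_congr rfl fun j _ => ?_)
            rw [Finset.sum_ite_eq]
            simp

end
end Paper
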